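/- Let I ⊆ ℝ be an open interval, a, b, f₂ : ℝ → ℝ with f₂(x) + b(x)² ≥ 0 on I, let ε ∈ {1, −1}, and set w(x) = −b(x) + ε·√(f₂(x) + b(x)²); assume w(x) ≠ 0 on I. Let E be differentiable on I with E'(x) = −f₂(x)/(2w(x)), let J be differentiable on I with J(x) ≠ 0 and J'(x) = a(x)·exp(E(x)), and define c(x) = w(x)·exp(E(x)) / (2J(x)). Let S be differentiable on I with S'(x) = ε·√(f₂(x) + b(x)²), and G differentiable on I with G'(x) = c(x)·exp(S(x)). Then for every constant C ∈ ℝ, the function y(x) = J(x)·exp(−E(x)) + exp(S(x))/(C − G(x)) satisfies y'(x) = a(x) + b(x)y(x) + c(x)y(x)² at every x ∈ I with C − G(x) ≠ 0. -/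

import Mathlib

/-- Theorem 4 (Case 4): with `w = −b + ε√(f₂ + b²) ≠ 0`, `E' = −f₂/(2w)`,
`J ≠ 0`, `J' = a · exp E`, `c = w · exp E / (2J)`, `S' = ε√(f₂ + b²)` and
`G' = c · exp S`, the function `y = J · exp(−E) + exp S / (C − G)` solves the
Riccati equation wherever `C − G ≠ 0`. -/
theorem riccati_case4_general
    (p q : ℝ) (a b c f₂ E J S G : ℝ → ℝ) (ε : ℝ) (hε : ε = 1 ∨ ε = -1)
    (hnonneg : ∀ x ∈ Set.Ioo p q, f₂ x + b x ^ 2 ≥ 0)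
    (hw : ∀ x ∈ Set.Ioo p q, -b x + ε * Real.sqrt (f₂ x + b x ^ 2) ≠ 0)
    (hE : ∀ x ∈ Set.Ioo p q,
      HasDerivAt E (-f₂ x / (2 * (-b x + ε * Real.sqrt (f₂ x + b x ^ 2)))) x)
    (hJne : ∀ x ∈ Set.Ioo p q, J x ≠ 0)
    (hJ : ∀ x ∈ Set.Ioo p q, HasDerivAt J (a x * Real.exp (E x)) x)
    (hcdef : ∀ x ∈ Set.Ioo p q,
      c x = (-b x + ε * Real.sqrt (f₂ x + b x ^ 2)) * Real.exp (E x) / (2 * J x))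
    (hS : ∀ x ∈ Set.Ioo p q,
      HasDerivAt S (ε * Real.sqrt (f₂ x + b x ^ 2)) x)
    (hG : ∀ x ∈ Set.Ioo p q, HasDerivAt G (c x * Real.exp (S x)) x)
    (C : ℝ) :
    ∀ x ∈ Set.Ioo p q, C - G x ≠ 0 →
      HasDerivAt (fun t => J t * Real.exp (-E t) + Real.exp (S t) / (C - G t))
        (a x + b x * (J x * Real.exp (-E x) + Real.exp (S x) / (C - G x))
          + c x * (J x * Real.exp (-E x) + Real.exp (S x) / (C - G x)) ^ 2) x := by
  intro x hx hCG
  have hw' := hw x hx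
  have hJ' := hJne x hx
  have hc := hcdef x hx
  set s : ℝ := ε * Real.sqrt (f₂ x + b x ^ 2) with hs
  have hε2 : ε ^ 2 = 1 := by rcases hε with h | h <;> simp [h]
  have hs2 : s ^ 2 = f₂ x + b x ^ 2 := by
    rw [hs, mul_pow, hε2, one_mul, Real.sq_sqrt (hnonneg x hx)]
  have hEx : Real.exp (E x) * Real.exp (-E x) = 1 := by
    rw [← Real.exp_add]; simp
  have d1 : HasDerivAt (fun t => J t * Real.exp (-E t))
      (a x * Real.exp (E x) * Real.exp (-E x)
        + J x * (Real.exp (-E x) * -(-f₂ x / (2 * (-b x + s))))) x :=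
    (hJ x hx).mul ((hE x hx).neg.exp)
  have d2 : HasDerivAt (fun t => Real.exp (S t) / (C - G t))
      ((Real.exp (S x) * s * (C - G x) -
        Real.exp (S x) * (0 - c x * Real.exp (S x))) / (C - G x) ^ 2) x :=
    ((hS x hx).exp).div ((hasDerivAt_const x C).sub (hG x hx)) hCG
  have := d1.add d2
  refine this.congr_deriv ?_
  have hue : Real.exp (-E x) ≠ 0 := Real.exp_ne_zero _
  have hv : Real.exp (E x) = 1 / Real.exp (-E x) := by
    field_simp [eq_comm] at hEx ⊢
    linarith [hEx]
  have hF : f₂ x = s ^ 2 - b x ^ 2 := by linarith [hs2]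
  rw [hc, hv, hF]
  field_simp
  ring
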